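/- Let m_n = (3/2)n(n+3) for integers n ≥ 3. With MS(n) = 4^{n+1}/ω_n^{1/n}, C(n,m) = max{ (1/n)(m ω_m / ((n+m) ω_{n+m}))^{1/n}, 1/(n ω_n^{1/n}) } and S(n,2) = π^{-1/2} (n-1)/(n(n-2)) · (Γ(n)/Γ(n/2))^{1/n}, one has lim_{n→∞} MS(n)/C(n, m_n) = +∞ and lim_{n→∞} C(n, m_n)/S(n,2) = +∞. -/

import Mathlib

open Real Filter

/-- The Lebesgue volume of the unit ball in `ℝ^k`. -/
noncomputable def ballVol (k : ℕ) : ℝ := Real.pi ^ ((k : ℝ) / 2) / Real.Gamma ((k : ℝ) / 2 + 1)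

/-- The Michael–Simon constant. -/
noncomputable def MS (n : ℕ) : ℝ := 4 ^ (n + 1) / ballVol n ^ ((1 : ℝ) / n)

/-- The Brendle constant. -/
noncomputable def Cnm (n m : ℕ) : ℝ :=
  max ((1 / (n : ℝ)) * ((m : ℝ) * ballVol m / (((n : ℝ) + m) * ballVol (n + m))) ^ ((1 : ℝ) / n))
    (1 / ((n : ℝ) * ballVol n ^ ((1 : ℝ) / n)))

/-- The minimal-submanifold Sobolev constant at `p = 2`. -/
noncomputable def S2 (n : ℕ) : ℝ :=
  Real.pi ^ (-(1 : ℝ) / 2) * ((n : ℝ) - 1) / ((n : ℝ) * ((n : ℝ) - 2)) *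
    (Real.Gamma (n : ℝ) / Real.Gamma ((n : ℝ) / 2)) ^ ((1 : ℝ) / n)

/-- The Nash embedding codimension bound for compact manifolds: `m_n = (3/2) n (n+3)`. -/
def nashBound (n : ℕ) : ℕ := 3 * n * (n + 3) / 2


lemma wendel_upper {x : ℝ} (hx : 0 < x) :
    Real.Gamma (x + 1/2) ≤ Real.Gamma x * Real.sqrt x := by
  have h := Real.convexOn_log_Gamma.2 (Set.mem_Ioi.2 hx)
    (Set.mem_Ioi.2 (by linarith : (0:ℝ) < x + 1))
    (by norm_num : (0:ℝ) ≤ 1/2) (by norm_num : (0:ℝ) ≤ 1/2) (by norm_num)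
  simp only [smul_eq_mul, Function.comp_apply] at h
  have hxe : (1/2 : ℝ) * x + 1/2 * (x+1) = x + 1/2 := by ring
  rw [hxe, Real.Gamma_add_one (ne_of_gt hx)] at h
  have hg := Real.Gamma_pos_of_pos hx
  have hgh := Real.Gamma_pos_of_pos (by linarith : (0:ℝ) < x + 1/2)
  rw [Real.log_mul (ne_of_gt hx) (ne_of_gt hg)] at h
  have hineq : Real.log (Real.Gamma (x + 1/2)) ≤ Real.log (Real.Gamma x * Real.sqrt x) := by
    rw [Real.log_mul (ne_of_gt hg) (ne_of_gt (Real.sqrt_pos.2 hx)),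
      Real.log_sqrt hx.le]
    linarith
  exact (Real.log_le_log_iff hgh (by positivity)).1 hineq

lemma wendel_lower {x : ℝ} (hx : 1/2 < x) :
    Real.Gamma x * Real.sqrt (x - 1/2) ≤ Real.Gamma (x + 1/2) := by
  have hx0 : (0:ℝ) < x := by linarith
  have h := Real.convexOn_log_Gamma.2 (Set.mem_Ioi.2 (by linarith : (0:ℝ) < x + 1/2))
    (Set.mem_Ioi.2 (by linarith : (0:ℝ) < x + 3/2))
    (by norm_num : (0:ℝ) ≤ 1/2) (by norm_num : (0:ℝ) ≤ 1/2) (by norm_num)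
  simp only [smul_eq_mul, Function.comp_apply] at h
  have hxe : (1/2 : ℝ) * (x + 1/2) + 1/2 * (x + 3/2) = x + 1 := by ring
  have hxe2 : (x : ℝ) + 3/2 = (x + 1/2) + 1 := by ring
  rw [hxe, hxe2, Real.Gamma_add_one (by linarith : (x:ℝ) + 1/2 ≠ 0),
    Real.Gamma_add_one (ne_of_gt hx0)] at h
  have hg := Real.Gamma_pos_of_pos hx0
  have hgh := Real.Gamma_pos_of_pos (by linarith : (0:ℝ) < x + 1/2)
  rw [Real.log_mul (ne_of_gt hx0) (ne_of_gt hg),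
    Real.log_mul (by linarith : (x:ℝ) + 1/2 ≠ 0) (ne_of_gt hgh)] at h
  have hs : (0:ℝ) < x - 1/2 := by linarith
  have key : Real.log (Real.Gamma x * Real.sqrt (x - 1/2)) ≤ Real.log (Real.Gamma (x + 1/2)) := by
    rw [Real.log_mul (ne_of_gt hg) (ne_of_gt (Real.sqrt_pos.2 hs)), Real.log_sqrt hs.le]
    have h2 : Real.log (x - 1/2) + Real.log (x + 1/2) ≤ 2 * Real.log x := by
      have h3 : Real.log ((x - 1/2) * (x + 1/2)) ≤ Real.log (x * x) :=
        Real.log_le_log (by nlinarith) (by nlinarith)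
      rw [Real.log_mul (ne_of_gt hs) (by linarith), Real.log_mul (ne_of_gt hx0) (ne_of_gt hx0)] at h3
      linarith
    linarith
  exact (Real.log_le_log_iff (by positivity) hgh).1 key

/-- Key two-sided bound on `Γ(x + n/2) / Γ x` via Wendel. -/
lemma Gamma_ratio_le {x : ℝ} (hx : 1 ≤ x) (n : ℕ) :
    Real.Gamma (x + n/2) ≤ Real.Gamma x * Real.sqrt (x + n/2) ^ n := by
  induction n with
  | zero => simp [le_mul_iff_one_le_right (Real.Gamma_pos_of_pos (by linarith : (0:ℝ) < x))]
  | succ n ih =>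
    have hxn : (0:ℝ) < x + n/2 := by positivity
    have h1 : (x : ℝ) + (n+1 : ℕ)/2 = (x + n/2) + 1/2 := by push_cast; ring
    have h2 := wendel_upper hxn
    calc Real.Gamma (x + (n+1 : ℕ)/2) = Real.Gamma ((x + n/2) + 1/2) := by rw [h1]
      _ ≤ Real.Gamma (x + n/2) * Real.sqrt (x + n/2) := h2
      _ ≤ (Real.Gamma x * Real.sqrt (x + n/2) ^ n) * Real.sqrt (x + n/2) := by
          apply mul_le_mul_of_nonneg_right ih (Real.sqrt_nonneg _)
      _ = Real.Gamma x * Real.sqrt (x + n/2) ^ (n+1) := by ring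
      _ ≤ Real.Gamma x * Real.sqrt (x + (n+1:ℕ)/2) ^ (n+1) := by
          apply mul_le_mul_of_nonneg_left _ (Real.Gamma_pos_of_pos (by linarith : (0:ℝ) < x)).le
          apply pow_le_pow_left₀ (Real.sqrt_nonneg _)
          apply Real.sqrt_le_sqrt
          push_cast; linarith

lemma le_Gamma_ratio {x : ℝ} (hx : 1 ≤ x) (n : ℕ) :
    Real.Gamma x * Real.sqrt (x - 1/2) ^ n ≤ Real.Gamma (x + n/2) := by
  induction n with
  | zero => simp
  | succ n ih =>
    have hxn : (1:ℝ)/2 < x + n/2 := by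
      have : (0:ℝ) ≤ (n:ℝ)/2 := by positivity
      linarith
    have h1 : (x : ℝ) + (n+1 : ℕ)/2 = (x + n/2) + 1/2 := by push_cast; ring
    calc Real.Gamma x * Real.sqrt (x - 1/2) ^ (n+1)
        = (Real.Gamma x * Real.sqrt (x - 1/2) ^ n) * Real.sqrt (x - 1/2) := by ring
      _ ≤ Real.Gamma (x + n/2) * Real.sqrt (x - 1/2) := by
          apply mul_le_mul_of_nonneg_right ih (Real.sqrt_nonneg _)
      _ ≤ Real.Gamma (x + n/2) * Real.sqrt ((x + n/2) - 1/2) := by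
          apply mul_le_mul_of_nonneg_left _ (Real.Gamma_pos_of_pos (by linarith : (0:ℝ) < x + n/2)).le
          apply Real.sqrt_le_sqrt
          have : (0:ℝ) ≤ (n:ℝ)/2 := by positivity
          linarith
      _ ≤ Real.Gamma ((x + n/2) + 1/2) := wendel_lower hxn
      _ = Real.Gamma (x + (n+1:ℕ)/2) := by rw [h1]
lemma sqrt_pow_eq_rpow {a : ℝ} (ha : 0 ≤ a) (n : ℕ) :
    Real.sqrt a ^ n = a ^ ((n : ℝ)/2) := by
  rw [Real.sqrt_eq_rpow, ← Real.rpow_natCast (a ^ ((1:ℝ)/2)) n, ← Real.rpow_mul ha]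
  ring_nf

lemma rpow_half_unfold {a : ℝ} (ha : 0 ≤ a) {n : ℕ} (hn : n ≠ 0) :
    (a ^ ((n : ℝ)/2)) ^ ((1:ℝ)/n) = Real.sqrt a := by
  rw [← Real.rpow_mul ha, Real.sqrt_eq_rpow]
  congr 1
  field_simp

lemma ballVol_pos (k : ℕ) : 0 < ballVol k := by
  have : (0:ℝ) < (k:ℝ)/2 + 1 := by positivity
  exact div_pos (Real.rpow_pos_of_pos Real.pi_pos _) (Real.Gamma_pos_of_pos this)

lemma ballVol_le {n : ℕ} (hn : 1 ≤ n) : ballVol n ≤ (9:ℝ) ^ ((n:ℝ)/2) := by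
  have hΓ : (1/2 : ℝ) ^ ((n:ℝ)/2) ≤ Real.Gamma ((n:ℝ)/2 + 1) := by
    have := le_Gamma_ratio (le_refl (1:ℝ)) n
    rw [Real.Gamma_one, one_mul, sqrt_pow_eq_rpow (by norm_num : (0:ℝ) ≤ 1 - 1/2)] at this
    rw [show ((n:ℝ)/2 + 1) = 1 + (n:ℝ)/2 by ring]
    convert this using 2
    norm_num
  have h1 : ballVol n ≤ Real.pi ^ ((n:ℝ)/2) / (1/2 : ℝ) ^ ((n:ℝ)/2) := by
    apply div_le_div_of_nonneg_left (by positivity) (by positivity) hΓ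
  refine h1.trans ?_
  rw [← Real.div_rpow Real.pi_pos.le (by norm_num)]
  apply Real.rpow_le_rpow (by positivity) ?_ (by positivity)
  rw [div_div_eq_mul_div, div_one]
  nlinarith [Real.pi_lt_d2]

lemma le_ballVol {n : ℕ} (hn : 1 ≤ n) : ((1:ℝ)/(n:ℝ)^2) ^ ((n:ℝ)/2) ≤ ballVol n := by
  have hn' : (1:ℝ) ≤ (n:ℝ) := by exact_mod_cast hn
  have hΓ : Real.Gamma ((n:ℝ)/2 + 1) ≤ (1 + (n:ℝ)/2) ^ ((n:ℝ)/2) := by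
    have := Gamma_ratio_le (le_refl (1:ℝ)) n
    rw [Real.Gamma_one, one_mul, sqrt_pow_eq_rpow (by positivity : (0:ℝ) ≤ 1 + (n:ℝ)/2)] at this
    rw [show ((n:ℝ)/2 + 1) = 1 + (n:ℝ)/2 by ring]
    exact this
  have h1 : Real.pi ^ ((n:ℝ)/2) / (1 + (n:ℝ)/2) ^ ((n:ℝ)/2) ≤ ballVol n := by
    apply div_le_div_of_nonneg_left (by positivity) (Real.Gamma_pos_of_pos (by positivity)) hΓ
  refine le_trans ?_ h1
  rw [← Real.div_rpow Real.pi_pos.le (by positivity)]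
  apply Real.rpow_le_rpow (by positivity) ?_ (by positivity)
  rw [div_le_div_iff₀ (by positivity) (by positivity)]
  nlinarith [Real.pi_gt_three]

lemma ballVol_rpow_le {n : ℕ} (hn : 1 ≤ n) : ballVol n ^ ((1:ℝ)/n) ≤ 3 := by
  have h := Real.rpow_le_rpow (ballVol_pos n).le (ballVol_le hn) (by positivity : (0:ℝ) ≤ (1:ℝ)/n)
  rwa [rpow_half_unfold (by norm_num) (by omega : n ≠ 0),
    show Real.sqrt 9 = 3 by
      rw [show (9:ℝ) = 3^2 by norm_num]; exact Real.sqrt_sq (by norm_num)] at h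

lemma le_ballVol_rpow {n : ℕ} (hn : 1 ≤ n) : (1:ℝ)/(n:ℝ) ≤ ballVol n ^ ((1:ℝ)/n) := by
  have hn0 : (0:ℝ) < (n:ℝ) := by exact_mod_cast hn
  have h := Real.rpow_le_rpow (by positivity) (le_ballVol hn) (by positivity : (0:ℝ) ≤ (1:ℝ)/n)
  rwa [rpow_half_unfold (by positivity) (by omega : n ≠ 0),
    show Real.sqrt ((1:ℝ)/(n:ℝ)^2) = 1/(n:ℝ) by
      rw [show (1:ℝ)/(n:ℝ)^2 = (1/(n:ℝ))^2 by ring]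
      exact Real.sqrt_sq (by positivity)] at h

lemma nash_cast (n : ℕ) : ((nashBound n : ℕ) : ℝ) = 3*(n:ℝ)*((n:ℝ)+3)/2 := by
  have h2 : 2 ∣ 3*n*(n+3) := by
    have : Even (n*(n+3)) := by
      rcases Nat.even_or_odd n with h | h
      · exact h.mul_right _
      · exact Even.mul_left (h.add_odd (by decide)) _
    rcases this with ⟨k, hk⟩
    exact ⟨3*k, by rw [mul_assoc, hk]; ring⟩
  rw [nashBound, Nat.cast_div h2 (by norm_num)]
  push_cast; ring

lemma nash_ge {n : ℕ} (hn : 1 ≤ n) : (n:ℝ) ≤ (nashBound n : ℝ) := by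
  have hn' : (1:ℝ) ≤ (n:ℝ) := by exact_mod_cast hn
  rw [nash_cast]; nlinarith

lemma ratio_eq {n : ℕ} (m : ℕ) (hn : 1 ≤ n) :
    (m:ℝ) * ballVol m / (((n:ℝ) + m) * ballVol (n + m)) =
    ((m:ℝ)/((n:ℝ)+(m:ℝ))) * (Real.Gamma (((m:ℝ)/2+1) + (n:ℝ)/2) / Real.Gamma ((m:ℝ)/2+1) /
      Real.pi ^ ((n:ℝ)/2)) := by
  have hn0 : (0:ℝ) < (n:ℝ) := by exact_mod_cast hn
  unfold ballVol
  have hπ : Real.pi ^ (((n+m : ℕ):ℝ)/2) = Real.pi ^ ((n:ℝ)/2) * Real.pi ^ ((m:ℝ)/2) := by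
    rw [← Real.rpow_add Real.pi_pos]; push_cast; ring_nf
  have harg : ((n+m : ℕ):ℝ)/2 + 1 = ((m:ℝ)/2+1) + (n:ℝ)/2 := by push_cast; ring
  rw [harg, hπ]
  have g1 : (0:ℝ) < Real.Gamma ((m:ℝ)/2+1) := Real.Gamma_pos_of_pos (by positivity)
  have g2 : (0:ℝ) < Real.Gamma (((m:ℝ)/2+1) + (n:ℝ)/2) := Real.Gamma_pos_of_pos (by positivity)
  have hp1 : (0:ℝ) < Real.pi ^ ((n:ℝ)/2) := Real.rpow_pos_of_pos Real.pi_pos _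
  have hp2 : (0:ℝ) < Real.pi ^ ((m:ℝ)/2) := Real.rpow_pos_of_pos Real.pi_pos _
  have hnm : (0:ℝ) < (n:ℝ) + m := by positivity
  field_simp

lemma Cnm_le_one {n : ℕ} (hn : 3 ≤ n) : Cnm n (nashBound n) ≤ 1 := by
  have hn1 : 1 ≤ n := by omega
  have hn0 : (0:ℝ) < n := by exact_mod_cast hn1
  have hn3 : (3:ℝ) ≤ (n:ℝ) := by exact_mod_cast hn
  apply max_le
  · -- A part
    set m := nashBound n with hm
    have hmc : ((m:ℕ):ℝ) = 3*(n:ℝ)*((n:ℝ)+3)/2 := nash_cast n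
    set x : ℝ := (m:ℝ)/2 + 1 with hx
    have hx1 : (1:ℝ) ≤ x := by
      have : (0:ℝ) ≤ (m:ℝ)/2 := by positivity
      rw [hx]; linarith
    have hxn : (0:ℝ) ≤ x + (n:ℝ)/2 := by positivity
    have hΓ : Real.Gamma (x + (n:ℝ)/2) ≤ Real.Gamma x * (x + (n:ℝ)/2) ^ ((n:ℝ)/2) := by
      have := Gamma_ratio_le hx1 n
      rwa [sqrt_pow_eq_rpow hxn] at this
    have g1 : (0:ℝ) < Real.Gamma x := Real.Gamma_pos_of_pos (by positivity)
    have hq : (x + (n:ℝ)/2)/Real.pi ≤ (n:ℝ)^2 := by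
      rw [div_le_iff₀ Real.pi_pos]
      have h3 : (3:ℝ) < Real.pi := Real.pi_gt_three
      rw [hx, hmc]
      nlinarith
    have hE : (m:ℝ) * ballVol m / (((n:ℝ) + m) * ballVol (n + m)) ≤
        ((x + (n:ℝ)/2)/Real.pi) ^ ((n:ℝ)/2) := by
      rw [ratio_eq m hn1, Real.div_rpow hxn Real.pi_pos.le]
      have h1 : (m:ℝ)/((n:ℝ)+(m:ℝ)) ≤ 1 := by
        rw [div_le_one (by positivity)]; linarith
      have h2 : Real.Gamma (x + (n:ℝ)/2) / Real.Gamma x / Real.pi ^ ((n:ℝ)/2) ≤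
          (x + (n:ℝ)/2) ^ ((n:ℝ)/2) / Real.pi ^ ((n:ℝ)/2) := by
        gcongr
        rw [div_le_iff₀ g1, mul_comm]
        exact hΓ
      calc (m:ℝ)/((n:ℝ)+(m:ℝ)) * (Real.Gamma (x + (n:ℝ)/2) / Real.Gamma x / Real.pi ^ ((n:ℝ)/2))
          ≤ 1 * ((x + (n:ℝ)/2) ^ ((n:ℝ)/2) / Real.pi ^ ((n:ℝ)/2)) := by
            apply mul_le_mul h1 h2 ?_ (by norm_num)
            positivity
        _ = (x + (n:ℝ)/2) ^ ((n:ℝ)/2) / Real.pi ^ ((n:ℝ)/2) := one_mul _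
    have hR0 : (0:ℝ) ≤ (m:ℝ) * ballVol m / (((n:ℝ) + m) * ballVol (n + m)) := by
      have := ballVol_pos m; have := ballVol_pos (n+m); positivity
    have hfinal : ((m:ℝ) * ballVol m / (((n:ℝ) + m) * ballVol (n + m))) ^ ((1:ℝ)/n) ≤ (n:ℝ) := by
      have h := Real.rpow_le_rpow hR0 hE (by positivity : (0:ℝ) ≤ (1:ℝ)/n)
      rw [rpow_half_unfold (div_nonneg hxn Real.pi_pos.le) (by omega : n ≠ 0)] at h
      exact h.trans ((Real.sqrt_le_sqrt hq).trans_eq (Real.sqrt_sq hn0.le))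
    calc (1/(n:ℝ)) * ((m:ℝ) * ballVol m / (((n:ℝ) + m) * ballVol (n + m))) ^ ((1:ℝ)/n)
        ≤ (1/(n:ℝ)) * (n:ℝ) := by
          apply mul_le_mul_of_nonneg_left hfinal (by positivity)
      _ = 1 := by field_simp
  · have hbp : (0:ℝ) < ballVol n ^ ((1:ℝ)/n) := Real.rpow_pos_of_pos (ballVol_pos n) _
    rw [div_le_one (by positivity)]
    have := le_ballVol_rpow hn1
    calc (1:ℝ) = (n:ℝ) * (1/(n:ℝ)) := by field_simp
      _ ≤ (n:ℝ) * ballVol n ^ ((1:ℝ)/n) := by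
          apply mul_le_mul_of_nonneg_left this hn0.le

lemma one_fifth_le_Cnm {n : ℕ} (hn : 3 ≤ n) : 1/5 ≤ Cnm n (nashBound n) := by
  have hn1 : 1 ≤ n := by omega
  have hn0 : (0:ℝ) < n := by exact_mod_cast hn1
  have hn3 : (3:ℝ) ≤ (n:ℝ) := by exact_mod_cast hn
  refine le_trans ?_ (le_max_left _ _)
  set m := nashBound n with hm
  have hmc : ((m:ℕ):ℝ) = 3*(n:ℝ)*((n:ℝ)+3)/2 := nash_cast n
  have hm0 : (0:ℝ) < (m:ℝ) := by rw [hmc]; positivity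
  set x : ℝ := (m:ℝ)/2 + 1 with hx
  have hx1 : (1:ℝ) ≤ x := by
    have : (0:ℝ) ≤ (m:ℝ)/2 := by positivity
    rw [hx]; linarith
  have g1 : (0:ℝ) < Real.Gamma x := Real.Gamma_pos_of_pos (by linarith)
  have hπ : (0:ℝ) < Real.pi ^ ((n:ℝ)/2) := Real.rpow_pos_of_pos Real.pi_pos _
  -- lower Gamma ratio
  have hΓ : Real.Gamma x * ((m:ℝ)/2) ^ ((n:ℝ)/2) ≤ Real.Gamma (x + (n:ℝ)/2) := by
    have h1 := le_Gamma_ratio hx1 n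
    rw [sqrt_pow_eq_rpow (by rw [hx]; linarith : (0:ℝ) ≤ x - 1/2)] at h1
    refine le_trans ?_ h1
    apply mul_le_mul_of_nonneg_left ?_ g1.le
    apply Real.rpow_le_rpow (by positivity) (by rw [hx]; linarith) (by positivity)
  -- lower bound on the full ratio
  have hE : (1/2 : ℝ) * ((m:ℝ)/(2*Real.pi)) ^ ((n:ℝ)/2) ≤
      (m:ℝ) * ballVol m / (((n:ℝ) + m) * ballVol (n + m)) := by
    rw [ratio_eq m hn1]
    have h1 : (1/2 : ℝ) ≤ (m:ℝ)/((n:ℝ)+(m:ℝ)) := by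
      rw [le_div_iff₀ (by positivity)]
      have := nash_ge hn1
      rw [← hm] at this
      linarith
    have h2 : ((m:ℝ)/(2*Real.pi)) ^ ((n:ℝ)/2) ≤
        Real.Gamma (x + (n:ℝ)/2) / Real.Gamma x / Real.pi ^ ((n:ℝ)/2) := by
      rw [div_div, le_div_iff₀ (by positivity)]
      have he : ((m:ℝ)/(2*Real.pi)) ^ ((n:ℝ)/2) * Real.pi ^ ((n:ℝ)/2) = ((m:ℝ)/2) ^ ((n:ℝ)/2) := by
        rw [← Real.mul_rpow (by positivity) Real.pi_pos.le]
        congr 1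
        field_simp
      calc ((m:ℝ)/(2*Real.pi)) ^ ((n:ℝ)/2) * (Real.Gamma x * Real.pi ^ ((n:ℝ)/2))
          = ((m:ℝ)/(2*Real.pi)) ^ ((n:ℝ)/2) * Real.pi ^ ((n:ℝ)/2) * Real.Gamma x := by ring
        _ = ((m:ℝ)/2) ^ ((n:ℝ)/2) * Real.Gamma x := by rw [he]
        _ = Real.Gamma x * ((m:ℝ)/2) ^ ((n:ℝ)/2) := by ring
        _ ≤ Real.Gamma (x + (n:ℝ)/2) := hΓ
    exact mul_le_mul h1 h2 (Real.rpow_nonneg (by positivity) _)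
      (div_nonneg hm0.le (by positivity))
  -- take rpow (1/n)
  have hL0 : (0:ℝ) ≤ (1/2 : ℝ) * ((m:ℝ)/(2*Real.pi)) ^ ((n:ℝ)/2) := by positivity
  have hkey := Real.rpow_le_rpow hL0 hE (by positivity : (0:ℝ) ≤ (1:ℝ)/n)
  have hsplit : ((1/2 : ℝ) * ((m:ℝ)/(2*Real.pi)) ^ ((n:ℝ)/2)) ^ ((1:ℝ)/n) =
      (1/2 : ℝ) ^ ((1:ℝ)/n) * Real.sqrt ((m:ℝ)/(2*Real.pi)) := by
    rw [Real.mul_rpow (by norm_num) (by positivity),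
      rpow_half_unfold (by positivity) (by omega : n ≠ 0)]
  have hhalf : (1/2 : ℝ) ≤ (1/2 : ℝ) ^ ((1:ℝ)/n) := by
    have := Real.rpow_le_rpow_of_exponent_ge (by norm_num : (0:ℝ) < 1/2) (by norm_num)
      (show (1:ℝ)/n ≤ 1 by rw [div_le_one hn0]; exact_mod_cast hn1)
    simpa using this
  have hsqrt : (2*(n:ℝ)/5) ≤ Real.sqrt ((m:ℝ)/(2*Real.pi)) := by
    rw [show (2*(n:ℝ)/5) = Real.sqrt ((2*(n:ℝ)/5)^2) from (Real.sqrt_sq (by positivity)).symm]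
    apply Real.sqrt_le_sqrt
    rw [le_div_iff₀ (by positivity)]
    have h3 : Real.pi < 3.15 := Real.pi_lt_d2
    rw [hmc]
    nlinarith
  have hfin : (n:ℝ)/5 ≤ ((m:ℝ) * ballVol m / (((n:ℝ) + m) * ballVol (n + m))) ^ ((1:ℝ)/n) := by
    refine le_trans ?_ hkey
    rw [hsplit]
    calc (n:ℝ)/5 = (1/2) * (2*(n:ℝ)/5) := by ring
      _ ≤ (1/2 : ℝ) ^ ((1:ℝ)/n) * Real.sqrt ((m:ℝ)/(2*Real.pi)) := by
          apply mul_le_mul hhalf hsqrt (by positivity) (by positivity)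
  calc (1/5 : ℝ) = (1/(n:ℝ)) * ((n:ℝ)/5) := by field_simp
    _ ≤ (1/(n:ℝ)) * ((m:ℝ) * ballVol m / (((n:ℝ) + m) * ballVol (n + m))) ^ ((1:ℝ)/n) := by
        apply mul_le_mul_of_nonneg_left hfin (by positivity)

lemma S2_pos {n : ℕ} (hn : 3 ≤ n) : 0 < S2 n := by
  have hn3 : (3:ℝ) ≤ (n:ℝ) := by exact_mod_cast hn
  have g1 : (0:ℝ) < Real.Gamma ((n:ℝ)) := Real.Gamma_pos_of_pos (by linarith)
  have g2 : (0:ℝ) < Real.Gamma ((n:ℝ)/2) := Real.Gamma_pos_of_pos (by linarith)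
  have hπ : (0:ℝ) < Real.pi ^ (-(1:ℝ)/2) := Real.rpow_pos_of_pos Real.pi_pos _
  unfold S2
  have := Real.rpow_pos_of_pos (div_pos g1 g2) ((1:ℝ)/n)
  apply mul_pos (div_pos (mul_pos hπ (by linarith)) (by nlinarith)) this

lemma S2_le {n : ℕ} (hn : 3 ≤ n) : S2 n ≤ 2 * Real.sqrt n / n := by
  have hn3 : (3:ℝ) ≤ (n:ℝ) := by exact_mod_cast hn
  have hn0 : (0:ℝ) < (n:ℝ) := by linarith
  have g2 : (0:ℝ) < Real.Gamma ((n:ℝ)/2) := Real.Gamma_pos_of_pos (by linarith)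
  have hG : Real.Gamma ((n:ℝ)) / Real.Gamma ((n:ℝ)/2) ≤ (n:ℝ) ^ ((n:ℝ)/2) := by
    have h1 := Gamma_ratio_le (show (1:ℝ) ≤ (n:ℝ)/2 by linarith) n
    rw [show (n:ℝ)/2 + (n:ℝ)/2 = (n:ℝ) by ring, sqrt_pow_eq_rpow hn0.le] at h1
    rw [div_le_iff₀ g2, mul_comm]
    exact h1
  have hG0 : (0:ℝ) ≤ Real.Gamma ((n:ℝ)) / Real.Gamma ((n:ℝ)/2) :=
    (div_pos (Real.Gamma_pos_of_pos (by linarith)) g2).le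
  have hGr : (Real.Gamma ((n:ℝ)) / Real.Gamma ((n:ℝ)/2)) ^ ((1:ℝ)/n) ≤ Real.sqrt n := by
    have h := Real.rpow_le_rpow hG0 hG (by positivity : (0:ℝ) ≤ (1:ℝ)/n)
    rwa [rpow_half_unfold hn0.le (by omega : n ≠ 0)] at h
  have hπ1 : Real.pi ^ (-(1:ℝ)/2) ≤ 1 :=
    Real.rpow_le_one_of_one_le_of_nonpos (by nlinarith [Real.pi_gt_three]) (by norm_num)
  have hπ0 : (0:ℝ) < Real.pi ^ (-(1:ℝ)/2) := Real.rpow_pos_of_pos Real.pi_pos _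
  unfold S2
  calc Real.pi ^ (-(1:ℝ)/2) * ((n:ℝ) - 1) / ((n:ℝ) * ((n:ℝ) - 2)) *
        (Real.Gamma ((n:ℝ)) / Real.Gamma ((n:ℝ)/2)) ^ ((1:ℝ)/n)
      ≤ (((n:ℝ) - 1) / ((n:ℝ) * ((n:ℝ) - 2))) * Real.sqrt n := by
        apply mul_le_mul ?_ hGr (Real.rpow_nonneg hG0 _)
          (div_nonneg (by linarith) (by nlinarith))
        apply div_le_div_of_nonneg_right ?_ (by nlinarith)
        calc Real.pi ^ (-(1:ℝ)/2) * ((n:ℝ) - 1) ≤ 1 * ((n:ℝ) - 1) := by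
              apply mul_le_mul_of_nonneg_right hπ1 (by linarith)
          _ = (n:ℝ) - 1 := one_mul _
    _ ≤ (2/(n:ℝ)) * Real.sqrt n := by
        apply mul_le_mul_of_nonneg_right ?_ (Real.sqrt_nonneg _)
        rw [div_le_div_iff₀ (by nlinarith) hn0]
        nlinarith
    _ = 2 * Real.sqrt n / (n:ℝ) := by ring

lemma MS_ge {n : ℕ} (hn : 3 ≤ n) : (n:ℝ) ≤ MS n := by
  have hn1 : 1 ≤ n := by omega
  have hbv3 : ballVol n ^ ((1:ℝ)/n) ≤ 3 := ballVol_rpow_le hn1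
  have hbv0 : (0:ℝ) < ballVol n ^ ((1:ℝ)/n) := Real.rpow_pos_of_pos (ballVol_pos n) _
  have h2n : (n:ℝ) < 2^n := by exact_mod_cast (Nat.lt_two_pow_self (n := n))
  have h24 : (2:ℝ)^n ≤ 4^n := pow_le_pow_left₀ (by norm_num) (by norm_num) n
  have h4 : (4:ℝ)^(n+1) = 4 * 4^n := by ring
  calc (n:ℝ) ≤ (4:ℝ)^(n+1)/3 := by rw [h4]; nlinarith
    _ ≤ (4:ℝ)^(n+1) / ballVol n ^ ((1:ℝ)/n) := by
        apply div_le_div_of_nonneg_left (by positivity) hbv0 hbv3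
    _ = MS n := rfl

theorem stmt_13 :
    Filter.Tendsto (fun n : ℕ => MS n / Cnm n (nashBound n)) Filter.atTop Filter.atTop ∧
      Filter.Tendsto (fun n : ℕ => Cnm n (nashBound n) / S2 n) Filter.atTop Filter.atTop := by
  constructor
  · apply tendsto_atTop_mono' atTop ?_ tendsto_natCast_atTop_atTop
    filter_upwards [eventually_ge_atTop 3] with n hn
    have hC1 : Cnm n (nashBound n) ≤ 1 := Cnm_le_one hn
    have hC0 : (0:ℝ) < Cnm n (nashBound n) :=
      lt_of_lt_of_le (by norm_num) (one_fifth_le_Cnm hn)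
    have hMS0 : (0:ℝ) ≤ MS n := le_trans (by positivity) (MS_ge hn)
    calc (n:ℝ) ≤ MS n := MS_ge hn
      _ = MS n / 1 := (div_one _).symm
      _ ≤ MS n / Cnm n (nashBound n) := div_le_div_of_nonneg_left hMS0 hC0 hC1
  · have hsq : Filter.Tendsto (fun n : ℕ => Real.sqrt n / 10) atTop atTop := by
      apply Tendsto.atTop_div_const (by norm_num : (0:ℝ) < 10)
      have h1 : Filter.Tendsto (fun x : ℝ => x ^ ((1:ℝ)/2)) atTop atTop :=
        tendsto_rpow_atTop (by norm_num)
      have := h1.comp (tendsto_natCast_atTop_atTop (R := ℝ))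
      refine this.congr fun x => ?_
      simp [Function.comp, Real.sqrt_eq_rpow]
    apply tendsto_atTop_mono' atTop ?_ hsq
    filter_upwards [eventually_ge_atTop 3] with n hn
    have hn0 : (0:ℝ) < (n:ℝ) := by exact_mod_cast (by omega : 0 < n)
    have hC : (1/5 : ℝ) ≤ Cnm n (nashBound n) := one_fifth_le_Cnm hn
    have hS0 : (0:ℝ) < S2 n := S2_pos hn
    have hSle : S2 n ≤ 2 * Real.sqrt n / n := S2_le hn
    have hs0 : (0:ℝ) < Real.sqrt n := Real.sqrt_pos.2 hn0
    have hmul : Real.sqrt n * Real.sqrt n = (n:ℝ) := Real.mul_self_sqrt hn0.le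
    have heq : (1/5 : ℝ) / (2 * Real.sqrt n / n) = Real.sqrt n / 10 := by
      rw [div_eq_div_iff (by positivity) (by norm_num)]
      field_simp
      nlinarith
    calc Real.sqrt n / 10 = (1/5 : ℝ) / (2 * Real.sqrt n / n) := heq.symm
      _ ≤ (1/5 : ℝ) / S2 n := div_le_div_of_nonneg_left (by norm_num) hS0 hSle
      _ ≤ Cnm n (nashBound n) / S2 n := by gcongr
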